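/- The derivative of the CCIGF at s = 1 equals minus the cumulative copula entropy: for any k-dimensional copula C, d/ds [∫_{[0,1]^k} C(u)^s du] evaluated at s = 1 equals ∫_{[0,1]^k} C(u) ln(C(u)) du = -ζ(C). -/

import Mathlib

open MeasureTheory Real

/-- The derivative of the CCIGF at s = 1 equals minus the CCE:
d/ds ∫ C(u)^s du |_{s=1} = ∫ C(u) ln C(u) du. -/
theorem stmt9 (k : ℕ) (C : (Fin k → ℝ) → ℝ)
    (hCmeas : Measurable C)
    (hC01 : ∀ u, C u ∈ Set.Icc (0 : ℝ) 1) :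
    HasDerivAt (fun s : ℝ => ∫ u in Set.Icc (0 : Fin k → ℝ) 1, C u ^ s)
      (∫ u in Set.Icc (0 : Fin k → ℝ) 1, C u * Real.log (C u)) 1 := by
  set μ := (volume : Measure (Fin k → ℝ)).restrict (Set.Icc 0 1) with hμ
  haveI : IsFiniteMeasure μ := by
    constructor
    rw [hμ, Measure.restrict_apply_univ]
    exact isCompact_Icc.measure_lt_top
  have hmeas : ∀ {s : ℝ}, 0 ≤ s → Measurable (fun u => C u ^ s) := fun hs =>
    (Real.continuous_rpow_const hs).measurable.comp hCmeas
  have key := hasDerivAt_integral_of_dominated_loc_of_deriv_le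
    (F := fun s u => C u ^ s) (F' := fun s u => C u ^ s * Real.log (C u))
    (x₀ := (1:ℝ)) (bound := fun _ => (2:ℝ)) (μ := μ)
    (s := Metric.ball (1:ℝ) (1/2)) (Metric.ball_mem_nhds _ (by norm_num))
    (by
      filter_upwards [eventually_gt_nhds (show (0:ℝ) < 1 by norm_num)] with s hs
      exact (hmeas hs.le).aestronglyMeasurable)
    ?_ ((hmeas zero_le_one).mul hCmeas.log).aestronglyMeasurable ?_
    (integrable_const 2) ?_
  · have := key.2
    simpa [Real.rpow_one] using this
  · -- integrability of F 1
    refine (integrable_const (1:ℝ)).mono'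
      ((hmeas zero_le_one).aestronglyMeasurable) ?_
    filter_upwards with u
    rw [Real.norm_eq_abs, abs_of_nonneg (Real.rpow_nonneg (hC01 u).1 _)]
    exact Real.rpow_le_one (hC01 u).1 (hC01 u).2 zero_le_one
  · -- bound
    filter_upwards with u s hs
    have hx0 := (hC01 u).1
    have hx1 := (hC01 u).2
    have hs' : (1/2 : ℝ) ≤ s := by
      rw [Metric.mem_ball, Real.dist_eq, abs_lt] at hs; linarith [hs.1]
    rcases eq_or_lt_of_le hx0 with h0 | h0
    · simp [← h0, Real.log_zero]
    · have h1 : C u ^ s ≤ C u ^ (1/2 : ℝ) :=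
        Real.rpow_le_rpow_of_exponent_ge h0 hx1 hs'
      have h2 : -Real.log (C u) ≤ 2 * C u ^ (-(1/2) : ℝ) := by
        have := Real.log_le_sub_one_of_pos (x := C u ^ (-(1/2) : ℝ))
          (Real.rpow_pos_of_pos h0 _)
        rw [Real.log_rpow h0] at this
        nlinarith [Real.rpow_pos_of_pos h0 (-(1/2) : ℝ)]
      have hlog : Real.log (C u) ≤ 0 := Real.log_nonpos hx0 hx1
      rw [Real.norm_eq_abs, abs_mul, abs_of_nonneg (Real.rpow_nonneg hx0 _),
        abs_of_nonpos hlog]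
      calc C u ^ s * -Real.log (C u)
          ≤ C u ^ (1/2 : ℝ) * (2 * C u ^ (-(1/2) : ℝ)) := by
            apply mul_le_mul h1 h2 (by linarith) (Real.rpow_nonneg hx0 _)
        _ = 2 * (C u ^ (1/2 : ℝ) * C u ^ (-(1/2) : ℝ)) := by ring
        _ = 2 := by
            rw [← Real.rpow_add h0]
            norm_num
  · -- differentiability
    filter_upwards with u s hs
    have hs0 : 0 < s := by
      rw [Metric.mem_ball, Real.dist_eq, abs_lt] at hs; linarith [hs.1]
    rcases eq_or_lt_of_le (hC01 u).1 with h0 | h0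
    · have heq : (fun t : ℝ => C u ^ t) =ᶠ[nhds s] fun _ => (0:ℝ) := by
        filter_upwards [eventually_gt_nhds hs0] with t ht
        rw [← h0, Real.zero_rpow ht.ne']
      have : C u ^ s * Real.log (C u) = 0 := by
        rw [← h0, Real.log_zero, mul_zero]
      rw [this]
      exact (hasDerivAt_const s (0:ℝ)).congr_of_eventuallyEq heq
    · exact (Real.hasStrictDerivAt_const_rpow h0 s).hasDerivAt
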